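/- Policy performance lower bound (Lemma 3.1, lower inequality): in a finite discounted MDP, for any two policies π and π' with (π s a = 0 → π' s a = 0) and any signal F : S → A → ℝ, J_F(π') − J_F(π) ≥ (1/(1−γ)) · 𝔸_F(π,π') − (√2 · γ · ε_F(π,π') / (1−γ)²) · √(D̄_KL(π'‖π)). -/

import Mathlib

open Real BigOperators
set_option linter.unusedSectionVars false
set_option maxHeartbeats 1000000

/-- Induced transition matrix of policy `pol`: `P_pol(s,s') = ∑ a, pol s a * P s a s'`. -/
noncomputable def transMat {S A : Type*} [Fintype A] (P : S → A → S → ℝ)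
    (pol : S → A → ℝ) : Matrix S S ℝ :=
  fun s s' => ∑ a, pol s a * P s a s'

/-- Discounted state visitation distribution
`d_pol(s) = (1-γ) ∑ₜ γ^t ∑_{s0} ρ0 s0 * (P_pol^t)(s0,s)`. -/
noncomputable def dVisit {S A : Type*} [Fintype S] [DecidableEq S] [Fintype A]
    (P : S → A → S → ℝ) (γ : ℝ) (ρ0 : S → ℝ) (pol : S → A → ℝ) (s : S) : ℝ :=
  (1 - γ) * ∑' t : ℕ, γ ^ t * ∑ s0, ρ0 s0 * (transMat P pol ^ t) s0 s

/-- Value function of signal `F` under policy `pol`. -/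
noncomputable def Vfun {S A : Type*} [Fintype S] [DecidableEq S] [Fintype A]
    (P : S → A → S → ℝ) (γ : ℝ) (F : S → A → ℝ) (pol : S → A → ℝ) (s : S) : ℝ :=
  ∑' t : ℕ, γ ^ t * ∑ s', (transMat P pol ^ t) s s' * ∑ a, pol s' a * F s' a

/-- Return `J_F(pol) = ∑ s, ρ0 s * V_F^pol(s)`. -/
noncomputable def Jret {S A : Type*} [Fintype S] [DecidableEq S] [Fintype A]
    (P : S → A → S → ℝ) (γ : ℝ) (ρ0 : S → ℝ) (F : S → A → ℝ) (pol : S → A → ℝ) : ℝ :=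
  ∑ s, ρ0 s * Vfun P γ F pol s

/-- Action-value function `Q_F^pol(s,a) = F s a + γ ∑_{s'} P s a s' * V_F^pol(s')`. -/
noncomputable def Qfun {S A : Type*} [Fintype S] [DecidableEq S] [Fintype A]
    (P : S → A → S → ℝ) (γ : ℝ) (F : S → A → ℝ) (pol : S → A → ℝ) (s : S) (a : A) : ℝ :=
  F s a + γ * ∑ s', P s a s' * Vfun P γ F pol s'

/-- Advantage function `A_F^pol(s,a) = Q_F^pol(s,a) - V_F^pol(s)`. -/
noncomputable def Adv {S A : Type*} [Fintype S] [DecidableEq S] [Fintype A]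
    (P : S → A → S → ℝ) (γ : ℝ) (F : S → A → ℝ) (pol : S → A → ℝ) (s : S) (a : A) : ℝ :=
  Qfun P γ F pol s a - Vfun P γ F pol s

/-- Expected surrogate advantage
`𝔸_F(pol,pol') = ∑ s, d_pol(s) ∑ a, pol' s a * A_F^pol(s,a)`. -/
noncomputable def surrAdv {S A : Type*} [Fintype S] [DecidableEq S] [Fintype A]
    (P : S → A → S → ℝ) (γ : ℝ) (ρ0 : S → ℝ) (F : S → A → ℝ)
    (pol pol' : S → A → ℝ) : ℝ :=
  ∑ s, dVisit P γ ρ0 pol s * ∑ a, pol' s a * Adv P γ F pol s a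

/-- `ε_F(pol,pol') = max_s |∑ a, pol' s a * A_F^pol(s,a)|`. -/
noncomputable def epsAdv {S A : Type*} [Fintype S] [DecidableEq S] [Fintype A] [Nonempty S]
    (P : S → A → S → ℝ) (γ : ℝ) (F : S → A → ℝ) (pol pol' : S → A → ℝ) : ℝ :=
  Finset.univ.sup' Finset.univ_nonempty fun s => |∑ a, pol' s a * Adv P γ F pol s a|

/-- Per-state KL divergence `KL(pol'‖pol)(s) = ∑ a, pol' s a * log (pol' s a / pol s a)`
(with the convention `0 * log 0 = 0`, automatic since `Real.log 0 = 0`). -/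
noncomputable def klState {S A : Type*} [Fintype A] (pol' pol : S → A → ℝ) (s : S) : ℝ :=
  ∑ a, pol' s a * Real.log (pol' s a / pol s a)

/-- Averaged KL divergence `D̄_KL(pol'‖pol) = ∑ s, d_pol(s) * KL(pol'‖pol)(s)`. -/
noncomputable def avgKL {S A : Type*} [Fintype S] [DecidableEq S] [Fintype A]
    (P : S → A → S → ℝ) (γ : ℝ) (ρ0 : S → ℝ) (pol' pol : S → A → ℝ) : ℝ :=
  ∑ s, dVisit P γ ρ0 pol s * klState pol' pol s


section basics
variable {S A : Type*} [Fintype S] [DecidableEq S] [Fintype A]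
variable (P : S → A → S → ℝ) (pol : S → A → ℝ)

lemma transMat_nonneg (hP0 : ∀ s a s', 0 ≤ P s a s') (hpol0 : ∀ s a, 0 ≤ pol s a)
    (s s' : S) : 0 ≤ transMat P pol s s' :=
  Finset.sum_nonneg fun a _ => mul_nonneg (hpol0 s a) (hP0 s a s')

lemma transMat_rowsum (hP1 : ∀ s a, ∑ s', P s a s' = 1) (hpol1 : ∀ s, ∑ a, pol s a = 1)
    (s : S) : ∑ s', transMat P pol s s' = 1 := by
  unfold transMat
  rw [Finset.sum_comm]
  simp_rw [← Finset.mul_sum, hP1]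
  simpa using hpol1 s

lemma pow_nonneg' (hP0 : ∀ s a s', 0 ≤ P s a s') (hpol0 : ∀ s a, 0 ≤ pol s a)
    (t : ℕ) (s s' : S) : 0 ≤ (transMat P pol ^ t) s s' := by
  induction t generalizing s s' with
  | zero => simp [Matrix.one_apply]; positivity
  | succ n ih =>
    rw [pow_succ, Matrix.mul_apply]
    exact Finset.sum_nonneg fun x _ => mul_nonneg (ih s x) (transMat_nonneg P pol hP0 hpol0 x s')

lemma pow_rowsum (hP1 : ∀ s a, ∑ s', P s a s' = 1) (hpol1 : ∀ s, ∑ a, pol s a = 1)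
    (t : ℕ) (s : S) : ∑ s', (transMat P pol ^ t) s s' = 1 := by
  induction t generalizing s with
  | zero => simp [Matrix.one_apply]
  | succ n ih =>
    simp_rw [pow_succ, Matrix.mul_apply]
    rw [Finset.sum_comm]
    simp_rw [← Finset.mul_sum, transMat_rowsum P pol hP1 hpol1]
    simpa using ih s

lemma tmPow_le_one (hP0 : ∀ s a s', 0 ≤ P s a s') (hpol0 : ∀ s a, 0 ≤ pol s a)
    (hP1 : ∀ s a, ∑ s', P s a s' = 1) (hpol1 : ∀ s, ∑ a, pol s a = 1)
    (t : ℕ) (s s' : S) : (transMat P pol ^ t) s s' ≤ 1 := by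
  calc (transMat P pol ^ t) s s' ≤ ∑ x, (transMat P pol ^ t) s x :=
        Finset.single_le_sum (fun x _ => pow_nonneg' P pol hP0 hpol0 t s x) (Finset.mem_univ s')
    _ = 1 := pow_rowsum P pol hP1 hpol1 t s

lemma summable_geom_bdd {γ : ℝ} (hγ0 : 0 ≤ γ) (hγ1 : γ < 1) {f : ℕ → ℝ} {C : ℝ}
    (hb : ∀ t, |f t| ≤ C) : Summable (fun t => γ ^ t * f t) := by
  apply Summable.of_norm_bounded (g := fun t => γ ^ t * C)
  · exact (summable_geometric_of_lt_one hγ0 hγ1).mul_right C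
  · intro t
    rw [Real.norm_eq_abs, abs_mul, abs_pow, abs_of_nonneg hγ0]
    exact mul_le_mul_of_nonneg_left (hb t) (by positivity)

/-- bound: |∑ s', (M^t) s s' * h s'| ≤ ∑ s', |h s'| -/
lemma rowcomb_bound (hP0 : ∀ s a s', 0 ≤ P s a s') (hpol0 : ∀ s a, 0 ≤ pol s a)
    (hP1 : ∀ s a, ∑ s', P s a s' = 1) (hpol1 : ∀ s, ∑ a, pol s a = 1)
    (h : S → ℝ) (t : ℕ) (s : S) :
    |∑ s', (transMat P pol ^ t) s s' * h s'| ≤ ∑ s', |h s'| := by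
  calc |∑ s', (transMat P pol ^ t) s s' * h s'| ≤ ∑ s', |(transMat P pol ^ t) s s' * h s'| :=
        Finset.abs_sum_le_sum_abs _ _
    _ ≤ ∑ s', |h s'| := by
        apply Finset.sum_le_sum; intro s' _
        rw [abs_mul, abs_of_nonneg (pow_nonneg' P pol hP0 hpol0 t s s')]
        exact mul_le_of_le_one_left (abs_nonneg _) (tmPow_le_one P pol hP0 hpol0 hP1 hpol1 t s s')

/-- bound for combinations by a subprobability vector -/
lemma ucomb_bound {u h : S → ℝ} (h0 : ∀ s, 0 ≤ u s) (h1 : ∀ s, u s ≤ 1) :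
    |∑ s, u s * h s| ≤ ∑ s, |h s| := by
  calc |∑ s, u s * h s| ≤ ∑ s, |u s * h s| := Finset.abs_sum_le_sum_abs _ _
    _ ≤ ∑ s, |h s| := by
        apply Finset.sum_le_sum; intro s _
        rw [abs_mul, abs_of_nonneg (h0 s)]
        exact mul_le_of_le_one_left (abs_nonneg _) (h1 s)

end basics

section mdp
variable {S A : Type*} [Fintype S] [DecidableEq S] [Fintype A]
variable (P : S → A → S → ℝ) (hP0 : ∀ s a s', 0 ≤ P s a s') (hP1 : ∀ s a, ∑ s', P s a s' = 1)
variable (γ : ℝ) (hγ0 : 0 < γ) (hγ1 : γ < 1)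
variable (ρ0 : S → ℝ) (hρ0 : ∀ s, 0 ≤ ρ0 s) (hρ1 : ∑ s, ρ0 s = 1)
variable (pol : S → A → ℝ) (hpol0 : ∀ s a, 0 ≤ pol s a) (hpol1 : ∀ s, ∑ a, pol s a = 1)

include hP0 hP1 hγ0 hγ1 hρ0 hρ1 hpol0 hpol1

/-- the distribution propagated t steps -/
lemma uprop_nonneg (t : ℕ) (s : S) : 0 ≤ ∑ s0, ρ0 s0 * (transMat P pol ^ t) s0 s :=
  Finset.sum_nonneg fun s0 _ => mul_nonneg (hρ0 s0) (pow_nonneg' P pol hP0 hpol0 t s0 s)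

lemma uprop_le_one (t : ℕ) (s : S) : ∑ s0, ρ0 s0 * (transMat P pol ^ t) s0 s ≤ 1 := by
  calc ∑ s0, ρ0 s0 * (transMat P pol ^ t) s0 s ≤ ∑ s0, ρ0 s0 * 1 := by
        apply Finset.sum_le_sum; intro s0 _
        exact mul_le_mul_of_nonneg_left (tmPow_le_one P pol hP0 hpol0 hP1 hpol1 t s0 s) (hρ0 s0)
    _ = 1 := by simpa using hρ1

lemma summable_dvisit (s : S) :
    Summable (fun t : ℕ => γ ^ t * ∑ s0, ρ0 s0 * (transMat P pol ^ t) s0 s) := by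
  apply summable_geom_bdd hγ0.le hγ1 (C := 1)
  intro t
  rw [abs_of_nonneg (uprop_nonneg P hP0 hP1 γ hγ0 hγ1 ρ0 hρ0 hρ1 pol hpol0 hpol1 t s)]
  exact uprop_le_one P hP0 hP1 γ hγ0 hγ1 ρ0 hρ0 hρ1 pol hpol0 hpol1 t s

lemma dVisit_nonneg (s : S) : 0 ≤ dVisit P γ ρ0 pol s := by
  unfold dVisit
  apply mul_nonneg (by linarith)
  apply tsum_nonneg
  intro t
  exact mul_nonneg (by positivity) (uprop_nonneg P hP0 hP1 γ hγ0 hγ1 ρ0 hρ0 hρ1 pol hpol0 hpol1 t s)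

lemma dVisit_sum_one : ∑ s, dVisit P γ ρ0 pol s = 1 := by
  unfold dVisit
  rw [← Finset.mul_sum]
  rw [← Summable.tsum_finsetSum (fun s _ => summable_dvisit P hP0 hP1 γ hγ0 hγ1 ρ0 hρ0 hρ1 pol hpol0 hpol1 s)]
  have : ∀ t : ℕ, ∑ s, γ ^ t * ∑ s0, ρ0 s0 * (transMat P pol ^ t) s0 s = γ ^ t := by
    intro t
    rw [← Finset.mul_sum, Finset.sum_comm]
    simp_rw [← Finset.mul_sum, pow_rowsum P pol hP1 hpol1, mul_one, hρ1, mul_one]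
  simp_rw [this]
  rw [tsum_geometric_of_lt_one hγ0.le hγ1]
  have : (1:ℝ) - γ ≠ 0 := by linarith
  field_simp

lemma dVisit_fixed (s : S) :
    dVisit P γ ρ0 pol s = (1 - γ) * ρ0 s + γ * ∑ s1, dVisit P γ ρ0 pol s1 * transMat P pol s1 s := by
  have hsum := summable_dvisit P hP0 hP1 γ hγ0 hγ1 ρ0 hρ0 hρ1 pol hpol0 hpol1
  unfold dVisit
  rw [Summable.tsum_eq_zero_add (hsum s)]
  have h0 : γ ^ 0 * ∑ s0, ρ0 s0 * (transMat P pol ^ 0) s0 s = ρ0 s := by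
    simp [Matrix.one_apply]
  have hsucc : ∀ t : ℕ, γ ^ (t + 1) * ∑ s0, ρ0 s0 * (transMat P pol ^ (t + 1)) s0 s
      = γ * ∑ s1, (γ ^ t * ∑ s0, ρ0 s0 * (transMat P pol ^ t) s0 s1) * transMat P pol s1 s := by
    intro t
    rw [pow_succ (transMat P pol)]
    simp only [Matrix.mul_apply, Finset.mul_sum, Finset.sum_mul]
    rw [Finset.sum_comm]
    exact Finset.sum_congr rfl fun s1 _ => Finset.sum_congr rfl fun s0 _ => by ring
  simp_rw [hsucc]
  rw [tsum_mul_left]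
  rw [Summable.tsum_finsetSum (fun s1 _ => ((hsum s1).mul_right _))]
  simp_rw [tsum_mul_right]
  rw [h0, mul_add]
  congr 1
  simp_rw [Finset.mul_sum]
  exact Finset.sum_congr rfl fun s1 _ => by ring

end mdp

section vrec
variable {S A : Type*} [Fintype S] [DecidableEq S] [Fintype A]
variable (P : S → A → S → ℝ) (hP0 : ∀ s a s', 0 ≤ P s a s') (hP1 : ∀ s a, ∑ s', P s a s' = 1)
variable (γ : ℝ) (hγ0 : 0 < γ) (hγ1 : γ < 1)
variable (pol : S → A → ℝ) (hpol0 : ∀ s a, 0 ≤ pol s a) (hpol1 : ∀ s, ∑ a, pol s a = 1)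
variable (F : S → A → ℝ)

include hP0 hP1 hγ0 hγ1 hpol0 hpol1

lemma summable_vfun (s : S) :
    Summable (fun t : ℕ => γ ^ t * ∑ s', (transMat P pol ^ t) s s' * ∑ a, pol s' a * F s' a) := by
  apply summable_geom_bdd hγ0.le hγ1 (C := ∑ s', |∑ a, pol s' a * F s' a|)
  intro t
  apply ucomb_bound (fun s' => pow_nonneg' P pol hP0 hpol0 t s s')
    (fun s' => tmPow_le_one P pol hP0 hpol0 hP1 hpol1 t s s')

lemma Vfun_fixed (s : S) :
    Vfun P γ F pol s = (∑ a, pol s a * F s a)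
      + γ * ∑ s', transMat P pol s s' * Vfun P γ F pol s' := by
  have hsum := summable_vfun P hP0 hP1 γ hγ0 hγ1 pol hpol0 hpol1 F
  unfold Vfun
  set rr : S → ℝ := fun s' => ∑ a, pol s' a * F s' a with hrr
  rw [Summable.tsum_eq_zero_add (hsum s)]
  have h0 : γ ^ 0 * ∑ s', (transMat P pol ^ 0) s s' * rr s' = rr s := by
    simp [Matrix.one_apply]
  have hsucc : ∀ t : ℕ, γ ^ (t + 1) * ∑ s', (transMat P pol ^ (t + 1)) s s' * rr s'
      = γ * ∑ x, transMat P pol s x *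
          (γ ^ t * ∑ s', (transMat P pol ^ t) x s' * rr s') := by
    intro t
    rw [pow_succ' (transMat P pol)]
    simp only [Matrix.mul_apply, Finset.mul_sum, Finset.sum_mul]
    rw [Finset.sum_comm]
    exact Finset.sum_congr rfl fun x _ => Finset.sum_congr rfl fun s' _ => by ring
  simp only [hrr] at hsucc h0
  simp_rw [hsucc]
  rw [tsum_mul_left, Summable.tsum_finsetSum (fun x _ => ((hsum x).mul_left _))]
  rw [h0]
  congr 2
  exact Finset.sum_congr rfl fun x _ => by rw [tsum_mul_left]

end vrec

section pdl
variable {S A : Type*} [Fintype S] [DecidableEq S] [Fintype A]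
variable (P : S → A → S → ℝ) (hP0 : ∀ s a s', 0 ≤ P s a s') (hP1 : ∀ s a, ∑ s', P s a s' = 1)
variable (γ : ℝ) (hγ0 : 0 < γ) (hγ1 : γ < 1)
variable (ρ0 : S → ℝ) (hρ0 : ∀ s, 0 ≤ ρ0 s) (hρ1 : ∑ s, ρ0 s = 1)
variable (pol : S → A → ℝ) (hpol0 : ∀ s a, 0 ≤ pol s a) (hpol1 : ∀ s, ∑ a, pol s a = 1)
variable (pol' : S → A → ℝ) (hpol'0 : ∀ s a, 0 ≤ pol' s a) (hpol'1 : ∀ s, ∑ a, pol' s a = 1)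
variable (F : S → A → ℝ)

include hP0 hP1 hγ0 hγ1 hρ0 hρ1 hpol0 hpol1 hpol'0 hpol'1

lemma pdl :
    ∑ s, dVisit P γ ρ0 pol' s * (∑ a, pol' s a * Adv P γ F pol s a)
      = (1 - γ) * (Jret P γ ρ0 F pol' - Jret P γ ρ0 F pol) := by
  set M' := transMat P pol' with hM'
  set V : S → ℝ := Vfun P γ F pol with hV
  set g : S → ℝ := fun s => ∑ a, pol' s a * Adv P γ F pol s a with hgdef
  set r' : S → ℝ := fun s => ∑ a, pol' s a * F s a with hr'
  set u : ℕ → S → ℝ := fun t s => ∑ s0, ρ0 s0 * (M' ^ t) s0 s with hu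
  set w : ℕ → ℝ := fun t => ∑ s, u t s * V s with hw
  set Aa : ℕ → ℝ := fun t => ∑ s, u t s * r' s with hAa
  have hu0 : ∀ t s, 0 ≤ u t s := fun t s =>
    uprop_nonneg P hP0 hP1 γ hγ0 hγ1 ρ0 hρ0 hρ1 pol' hpol'0 hpol'1 t s
  have hu1 : ∀ t s, u t s ≤ 1 := fun t s =>
    uprop_le_one P hP0 hP1 γ hγ0 hγ1 ρ0 hρ0 hρ1 pol' hpol'0 hpol'1 t s
  -- step A : expression for g
  have hg : ∀ s, g s = r' s + γ * (∑ s', M' s s' * V s') - V s := by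
    intro s
    rw [hgdef]
    simp only [Adv, Qfun, mul_add, mul_sub, ← hV]
    rw [Finset.sum_sub_distrib, Finset.sum_add_distrib]
    congr 1
    congr 1
    · -- middle term
      simp_rw [Finset.mul_sum, hM', transMat, Finset.sum_mul]
      rw [Finset.sum_comm]
      refine Finset.sum_congr rfl fun s' _ => ?_
      rw [Finset.mul_sum]
      exact Finset.sum_congr rfl fun a _ => by ring
    · rw [← Finset.sum_mul, hpol'1, one_mul]
  -- step C : propagation of u
  have husucc : ∀ t s', u (t+1) s' = ∑ s, u t s * M' s s' := by
    intro t s'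
    show ∑ s0, ρ0 s0 * (M' ^ (t+1)) s0 s' = _
    rw [pow_succ]
    simp only [Matrix.mul_apply, Finset.mul_sum, Finset.sum_mul]
    rw [Finset.sum_comm]
    refine Finset.sum_congr rfl fun s _ => ?_
    simp only [hu]
    rw [Finset.sum_mul]
    exact Finset.sum_congr rfl fun s0 _ => by ring
  have hwsucc : ∀ t, ∑ s, u t s * (∑ s', M' s s' * V s') = w (t+1) := by
    intro t
    show _ = ∑ s, u (t+1) s * V s
    simp_rw [husucc, Finset.sum_mul, Finset.mul_sum]
    rw [Finset.sum_comm]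
    exact Finset.sum_congr rfl fun x _ => Finset.sum_congr rfl fun y _ => by ring
  -- summability facts
  have hsw : Summable (fun t => γ ^ t * w t) :=
    summable_geom_bdd hγ0.le hγ1 (fun t => ucomb_bound (hu0 t) (hu1 t))
  have hsA : Summable (fun t => γ ^ t * Aa t) :=
    summable_geom_bdd hγ0.le hγ1 (fun t => ucomb_bound (hu0 t) (hu1 t))
  have hsg : ∀ s : S, Summable (fun t => (γ ^ t * u t s) * g s) := by
    intro s
    exact (summable_dvisit P hP0 hP1 γ hγ0 hγ1 ρ0 hρ0 hρ1 pol' hpol'0 hpol'1 s).mul_right _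
  -- identity 1
  have key1 : ∑ s, dVisit P γ ρ0 pol' s * g s
      = (1 - γ) * ∑' t : ℕ, γ ^ t * (∑ s, u t s * g s) := by
    unfold dVisit
    simp_rw [mul_assoc (1-γ), ← Finset.mul_sum]
    congr 1
    simp_rw [← tsum_mul_right]
    rw [← Summable.tsum_finsetSum (fun s _ => hsg s)]
    apply tsum_congr
    intro t
    rw [Finset.mul_sum]
    exact Finset.sum_congr rfl fun s _ => by ring
  -- identity per t
  have key2 : ∀ t, ∑ s, u t s * g s = Aa t + γ * w (t+1) - w t := by
    intro t
    simp_rw [hg, mul_sub, mul_add]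
    rw [Finset.sum_sub_distrib, Finset.sum_add_distrib]
    congr 1
    congr 1
    · rw [← hwsucc t, Finset.mul_sum]
      exact Finset.sum_congr rfl fun s _ => by ring
  -- identity 2 : tsum of Aa equals Jret pol'
  have key3 : ∑' t : ℕ, γ ^ t * Aa t = Jret P γ ρ0 F pol' := by
    unfold Jret Vfun
    simp_rw [← tsum_mul_left]
    rw [← Summable.tsum_finsetSum (fun s0 _ =>
      (summable_vfun P hP0 hP1 γ hγ0 hγ1 pol' hpol'0 hpol'1 F s0).mul_left (ρ0 s0))]
    apply tsum_congr
    intro t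
    simp only [hAa, hu, hr', ← hM']
    simp_rw [Finset.sum_mul, Finset.mul_sum]
    rw [Finset.sum_comm]
    exact Finset.sum_congr rfl fun s0 _ => Finset.sum_congr rfl fun s _ =>
      Finset.sum_congr rfl fun a _ => by ring
  have hw0 : w 0 = Jret P γ ρ0 F pol := by
    show ∑ s, u 0 s * V s = _
    unfold Jret
    apply Finset.sum_congr rfl
    intro s _
    have : u 0 s = ρ0 s := by
      show ∑ s0, ρ0 s0 * (M' ^ 0) s0 s = ρ0 s
      simp [Matrix.one_apply]
    rw [this, hV]
  -- telescoping
  have hb1 : Summable (fun t => γ ^ (t+1) * w (t+1)) :=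
    (summable_nat_add_iff 1).mpr hsw
  have htel : ∑' t : ℕ, γ ^ (t+1) * w (t+1) = (∑' t : ℕ, γ ^ t * w t) - γ ^ 0 * w 0 := by
    have := Summable.tsum_eq_zero_add hsw
    linarith [this]
  calc ∑ s, dVisit P γ ρ0 pol' s * g s
      = (1 - γ) * ∑' t : ℕ, γ ^ t * (∑ s, u t s * g s) := key1
    _ = (1 - γ) * ∑' t : ℕ, (γ ^ t * Aa t + γ ^ (t+1) * w (t+1) - γ ^ t * w t) := by
        congr 1
        apply tsum_congr
        intro t
        rw [key2 t]
        ring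
    _ = (1 - γ) * ((∑' t : ℕ, γ ^ t * Aa t) + (∑' t : ℕ, γ ^ (t+1) * w (t+1))
          - ∑' t : ℕ, γ ^ t * w t) := by
        congr 1
        rw [Summable.tsum_sub (hsA.add hb1) hsw, Summable.tsum_add hsA hb1]
    _ = (1 - γ) * (Jret P γ ρ0 F pol' - Jret P γ ρ0 F pol) := by
        rw [key3, htel, hw0]
        ring

end pdl

section l1
variable {S A : Type*} [Fintype S] [DecidableEq S] [Fintype A]
variable (P : S → A → S → ℝ) (hP0 : ∀ s a s', 0 ≤ P s a s') (hP1 : ∀ s a, ∑ s', P s a s' = 1)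
variable (γ : ℝ) (hγ0 : 0 < γ) (hγ1 : γ < 1)
variable (ρ0 : S → ℝ) (hρ0 : ∀ s, 0 ≤ ρ0 s) (hρ1 : ∑ s, ρ0 s = 1)
variable (pol : S → A → ℝ) (hpol0 : ∀ s a, 0 ≤ pol s a) (hpol1 : ∀ s, ∑ a, pol s a = 1)
variable (pol' : S → A → ℝ) (hpol'0 : ∀ s a, 0 ≤ pol' s a) (hpol'1 : ∀ s, ∑ a, pol' s a = 1)

include hP0 hP1 hγ0 hγ1 hρ0 hρ1 hpol0 hpol1 hpol'0 hpol'1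

lemma dvisit_l1_bound :
    ∑ s, |dVisit P γ ρ0 pol' s - dVisit P γ ρ0 pol s|
      ≤ (γ / (1 - γ)) * ∑ s, dVisit P γ ρ0 pol s * ∑ a, |pol' s a - pol s a| := by
  set M := transMat P pol with hM
  set M' := transMat P pol' with hM'
  set d : S → ℝ := dVisit P γ ρ0 pol with hd
  set d' : S → ℝ := dVisit P γ ρ0 pol' with hd'
  set e : S → ℝ := fun s => d' s - d s with he
  set c : S → ℝ := fun s => ∑ s1, d s1 * (M' s1 s - M s1 s) with hc
  have hfix := dVisit_fixed P hP0 hP1 γ hγ0 hγ1 ρ0 hρ0 hρ1 pol hpol0 hpol1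
  have hfix' := dVisit_fixed P hP0 hP1 γ hγ0 hγ1 ρ0 hρ0 hρ1 pol' hpol'0 hpol'1
  have herec : ∀ s, e s = γ * (∑ s1, e s1 * M' s1 s) + γ * c s := by
    intro s
    rw [he]
    simp only [hd, hd', hc]
    rw [hfix s, hfix' s]
    simp only [← hd, ← hd', ← hM, ← hM']
    rw [add_sub_add_left_eq_sub]
    simp_rw [Finset.mul_sum]
    rw [← Finset.sum_add_distrib, ← Finset.sum_sub_distrib]
    exact Finset.sum_congr rfl fun s1 _ => by ring
  set N := ∑ s, |e s| with hN
  set C := ∑ s, |c s| with hC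
  have hNC : N ≤ γ * N + γ * C := by
    calc N = ∑ s, |γ * (∑ s1, e s1 * M' s1 s) + γ * c s| := by
          rw [hN]; exact Finset.sum_congr rfl fun s _ => by rw [herec s]
      _ ≤ ∑ s, (γ * |∑ s1, e s1 * M' s1 s| + γ * |c s|) := by
          apply Finset.sum_le_sum; intro s _
          calc |γ * (∑ s1, e s1 * M' s1 s) + γ * c s|
              ≤ |γ * (∑ s1, e s1 * M' s1 s)| + |γ * c s| := abs_add_le _ _
            _ = γ * |∑ s1, e s1 * M' s1 s| + γ * |c s| := by
                rw [abs_mul, abs_mul, abs_of_pos hγ0]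
      _ = γ * (∑ s, |∑ s1, e s1 * M' s1 s|) + γ * C := by
          rw [Finset.sum_add_distrib, ← Finset.mul_sum, ← Finset.mul_sum]
      _ ≤ γ * N + γ * C := by
          have : ∑ s, |∑ s1, e s1 * M' s1 s| ≤ N := by
            calc ∑ s, |∑ s1, e s1 * M' s1 s| ≤ ∑ s, ∑ s1, |e s1| * M' s1 s := by
                  apply Finset.sum_le_sum; intro s _
                  refine (Finset.abs_sum_le_sum_abs _ _).trans ?_
                  apply Finset.sum_le_sum; intro s1 _
                  rw [abs_mul, abs_of_nonneg (transMat_nonneg P pol' hP0 hpol'0 s1 s)]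
              _ = ∑ s1, |e s1| * ∑ s, M' s1 s := by
                  rw [Finset.sum_comm]
                  exact Finset.sum_congr rfl fun s1 _ => by rw [Finset.mul_sum]
              _ = N := by
                  rw [hN]
                  exact Finset.sum_congr rfl fun s1 _ => by
                    rw [transMat_rowsum P pol' hP1 hpol'1, mul_one]
          nlinarith [this, hγ0]
  have hCb : C ≤ ∑ s1, d s1 * ∑ a, |pol' s1 a - pol s1 a| := by
    calc C ≤ ∑ s, ∑ s1, d s1 * |M' s1 s - M s1 s| := by
          apply Finset.sum_le_sum; intro s _
          refine (Finset.abs_sum_le_sum_abs _ _).trans ?_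
          apply Finset.sum_le_sum; intro s1 _
          rw [abs_mul, abs_of_nonneg (dVisit_nonneg P hP0 hP1 γ hγ0 hγ1 ρ0 hρ0 hρ1 pol hpol0 hpol1 s1)]
      _ = ∑ s1, d s1 * ∑ s, |M' s1 s - M s1 s| := by
          rw [Finset.sum_comm]
          exact Finset.sum_congr rfl fun s1 _ => by rw [Finset.mul_sum]
      _ ≤ ∑ s1, d s1 * ∑ a, |pol' s1 a - pol s1 a| := by
          apply Finset.sum_le_sum; intro s1 _
          apply mul_le_mul_of_nonneg_left _
            (dVisit_nonneg P hP0 hP1 γ hγ0 hγ1 ρ0 hρ0 hρ1 pol hpol0 hpol1 s1)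
          calc ∑ s, |M' s1 s - M s1 s|
              = ∑ s, |∑ a, (pol' s1 a - pol s1 a) * P s1 a s| := by
                apply Finset.sum_congr rfl; intro s _
                congr 1
                rw [hM', hM]
                unfold transMat
                rw [← Finset.sum_sub_distrib]
                exact Finset.sum_congr rfl fun a _ => by ring
            _ ≤ ∑ s, ∑ a, |pol' s1 a - pol s1 a| * P s1 a s := by
                apply Finset.sum_le_sum; intro s _
                refine (Finset.abs_sum_le_sum_abs _ _).trans ?_
                apply Finset.sum_le_sum; intro a _
                rw [abs_mul, abs_of_nonneg (hP0 s1 a s)]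
            _ = ∑ a, |pol' s1 a - pol s1 a| := by
                rw [Finset.sum_comm]
                apply Finset.sum_congr rfl; intro a _
                rw [← Finset.mul_sum, hP1, mul_one]
  have hγ1' : (0:ℝ) < 1 - γ := by linarith
  have hfinal : N ≤ (γ / (1 - γ)) * C := by
    rw [div_mul_eq_mul_div, le_div_iff₀ hγ1']
    nlinarith [hNC]
  calc N ≤ (γ / (1 - γ)) * C := hfinal
    _ ≤ (γ / (1 - γ)) * ∑ s1, d s1 * ∑ a, |pol' s1 a - pol s1 a| := by
        apply mul_le_mul_of_nonneg_left hCb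
        positivity

end l1

/-- `log x ≥ 1 - 1/x` for `x > 0`. -/
lemma log_ge_one_sub_inv {x : ℝ} (hx : 0 < x) : 1 - 1/x ≤ Real.log x := by
  have h := Real.log_le_sub_one_of_pos (show (0:ℝ) < 1/x by positivity)
  rw [Real.log_div one_ne_zero (ne_of_gt hx), Real.log_one] at h
  linarith

/-- auxiliary function g(t) = (t+1) log t - 2(t-1). -/
noncomputable def gaux (t : ℝ) : ℝ := (t + 1) * Real.log t - 2 * (t - 1)

lemma gaux_hasDeriv {t : ℝ} (ht : 0 < t) :
    HasDerivAt gaux (Real.log t + 1/t - 1) t := by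
  have h1 : HasDerivAt (fun t : ℝ => (t + 1) * Real.log t)
      (1 * Real.log t + (t + 1) * (1/t)) t := by
    exact ((hasDerivAt_id t).add_const 1).mul ((Real.hasDerivAt_log (ne_of_gt ht)).congr_deriv (by rw [one_div]))
  have h2 : HasDerivAt (fun t : ℝ => 2 * (t - 1)) 2 t := by
    simpa using ((hasDerivAt_id t).sub_const 1).const_mul 2
  have := h1.sub h2
  refine this.congr_deriv ?_
  field_simp
  ring

lemma gaux_mono : MonotoneOn gaux (Set.Ioi 0) := by
  apply monotoneOn_of_deriv_nonneg (convex_Ioi 0)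
  · apply ContinuousOn.sub
    · exact (continuousOn_id.add continuousOn_const).mul
        (Real.continuousOn_log.mono (fun x hx => ne_of_gt hx))
    · exact continuousOn_const.mul (continuousOn_id.sub continuousOn_const)
  · intro x hx
    rw [interior_Ioi] at hx
    exact (gaux_hasDeriv hx).differentiableAt.differentiableWithinAt
  · intro x hx
    rw [interior_Ioi] at hx
    rw [(gaux_hasDeriv hx).deriv]
    have := log_ge_one_sub_inv hx
    linarith

lemma gaux_one : gaux 1 = 0 := by simp [gaux]

/-- h(t) = 2(t+2)(t log t - t + 1) - 3(t-1)². -/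
noncomputable def haux (t : ℝ) : ℝ :=
  2 * (t + 2) * (t * Real.log t - t + 1) - 3 * (t - 1)^2

lemma haux_hasDeriv {t : ℝ} (ht : 0 < t) : HasDerivAt haux (4 * gaux t) t := by
  have hL : HasDerivAt (fun t : ℝ => t * Real.log t - t + 1) (Real.log t) t := by
    have h := (hasDerivAt_id t).mul (Real.hasDerivAt_log (ne_of_gt ht))
    have := (h.sub (hasDerivAt_id t)).add_const 1
    refine this.congr_deriv ?_
    have ht' : t ≠ 0 := ne_of_gt ht
    field_simp
    simp
  have h1 : HasDerivAt (fun t : ℝ => 2 * (t + 2)) 2 t := by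
    simpa using ((hasDerivAt_id t).add_const 2).const_mul 2
  have h2 := (h1.mul hL)
  have h3 : HasDerivAt (fun t : ℝ => 3 * (t - 1)^2) (3 * (2 * (t-1))) t := by
    have := (((hasDerivAt_id t).sub_const 1).pow 2).const_mul 3
    refine this.congr_deriv ?_
    simp [mul_comm]
  have := h2.sub h3
  refine this.congr_deriv ?_
  unfold gaux
  ring

lemma haux_one : haux 1 = 0 := by simp [haux]

lemma haux_cont : ContinuousOn haux (Set.Ioi 0) := by
  apply ContinuousOn.sub
  · apply ContinuousOn.mul
    · exact (continuousOn_const.mul (continuousOn_id.add continuousOn_const))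
    · exact ((continuousOn_id.mul (Real.continuousOn_log.mono (fun x hx => ne_of_gt hx))).sub
        continuousOn_id).add continuousOn_const
  · exact continuousOn_const.mul (((continuousOn_id.sub continuousOn_const)).pow 2)

lemma haux_nonneg {t : ℝ} (ht : 0 < t) : 0 ≤ haux t := by
  rcases le_or_gt 1 t with h | h
  · -- monotone on [1, ∞)
    have hmono : MonotoneOn haux (Set.Ici 1) := by
      apply monotoneOn_of_deriv_nonneg (convex_Ici 1)
      · exact haux_cont.mono (fun x hx => Set.mem_Ioi.mpr (lt_of_lt_of_le one_pos hx))
      · intro x hx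
        rw [interior_Ici] at hx
        exact (haux_hasDeriv (lt_trans one_pos hx)).differentiableAt.differentiableWithinAt
      · intro x hx
        rw [interior_Ici] at hx
        have hx1 : (1:ℝ) < x := hx
        rw [(haux_hasDeriv (lt_trans one_pos hx1)).deriv]
        have : gaux 1 ≤ gaux x := gaux_mono (Set.mem_Ioi.mpr one_pos)
          (Set.mem_Ioi.mpr (lt_trans one_pos hx1)) hx1.le
        rw [gaux_one] at this
        linarith
    have := hmono (Set.mem_Ici.mpr le_rfl) (Set.mem_Ici.mpr h) h
    rwa [haux_one] at this
  · -- antitone on (0, 1]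
    have hanti : AntitoneOn haux (Set.Ioc 0 1) := by
      apply antitoneOn_of_deriv_nonpos (convex_Ioc 0 1)
      · exact haux_cont.mono (fun x hx => hx.1)
      · intro x hx
        rw [interior_Ioc] at hx
        exact (haux_hasDeriv hx.1).differentiableAt.differentiableWithinAt
      · intro x hx
        rw [interior_Ioc] at hx
        rw [(haux_hasDeriv hx.1).deriv]
        have : gaux x ≤ gaux 1 := gaux_mono (Set.mem_Ioi.mpr hx.1)
          (Set.mem_Ioi.mpr one_pos) hx.2.le
        rw [gaux_one] at this
        linarith
    have := hanti (Set.mem_Ioc.mpr ⟨ht, h.le⟩) (Set.mem_Ioc.mpr ⟨one_pos, le_rfl⟩) h.le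
    rwa [haux_one] at this

/-- pointwise inequality: 3(x-y)² ≤ 2(x+2y)(x log(x/y) - x + y). -/
lemma pointwise_pinsker {x y : ℝ} (hx : 0 ≤ x) (hy : 0 ≤ y) (habs : y = 0 → x = 0) :
    3 * (x - y)^2 ≤ 2 * (x + 2*y) * (x * Real.log (x/y) - x + y) := by
  rcases eq_or_lt_of_le hy with h0 | hy'
  · rw [habs h0.symm, ← h0]; norm_num
  rcases eq_or_lt_of_le hx with h0 | hx'
  · rw [← h0]
    simp only [zero_sub, zero_mul, zero_add, sub_zero, zero_mul, zero_sub, neg_zero]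
    nlinarith [sq_nonneg y]
  have ht : 0 < x / y := by positivity
  have hh := haux_nonneg ht
  unfold haux at hh
  have e1 : x / y * Real.log (x/y) - x/y + 1 = (x * Real.log (x/y) - x + y) / y := by
    field_simp
  have e2 : (x/y + 2) = (x + 2*y)/y := by field_simp
  have hy2 : (0:ℝ) < y^2 := by positivity
  have e3 : (x/y - 1)^2 = (x-y)^2/y^2 := by
    field_simp
  rw [e1, e2, e3] at hh
  have key : 2 * ((x + 2*y)/y) * ((x * Real.log (x/y) - x + y)/y) - 3*((x-y)^2/y^2)
      = (2*(x+2*y)*(x*Real.log (x/y) - x + y) - 3*(x-y)^2)/y^2 := by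
    field_simp
  rw [key] at hh
  rcases div_nonneg_iff.mp hh with ⟨h, _⟩ | ⟨_, h⟩
  · linarith
  · nlinarith

lemma klterm_nonneg {x y : ℝ} (hx : 0 ≤ x) (hy : 0 ≤ y) (habs : y = 0 → x = 0) :
    0 ≤ x * Real.log (x/y) - x + y := by
  have hp := pointwise_pinsker hx hy habs
  rcases eq_or_lt_of_le (by positivity : (0:ℝ) ≤ x + 2*y) with h0 | hpos
  · have hx0 : x = 0 := by linarith
    have hy0 : y = 0 := by linarith
    simp [hx0, hy0]
  · nlinarith [sq_nonneg (x - y)]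

/-- Pinsker's inequality, finite version. -/
lemma pinsker_fin {A : Type*} [Fintype A] (p q : A → ℝ)
    (hp0 : ∀ a, 0 ≤ p a) (hq0 : ∀ a, 0 ≤ q a)
    (hp1 : ∑ a, p a = 1) (hq1 : ∑ a, q a = 1)
    (habs : ∀ a, q a = 0 → p a = 0) :
    ∑ a, |p a - q a| ≤ Real.sqrt (2 * ∑ a, p a * Real.log (p a / q a)) := by
  set k : A → ℝ := fun a => p a * Real.log (p a / q a) - p a + q a with hk
  set m : A → ℝ := fun a => (2 * p a + 4 * q a) / 3 with hm
  have hknn : ∀ a, 0 ≤ k a := fun a => klterm_nonneg (hp0 a) (hq0 a) (habs a)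
  have hmnn : ∀ a, 0 ≤ m a := fun a => by rw [hm]; have h1 := hp0 a; have h2 := hq0 a; positivity
  have hstep1 : ∀ a, |p a - q a| ≤ Real.sqrt (m a) * Real.sqrt (k a) := by
    intro a
    rw [← Real.sqrt_mul (hmnn a)]
    rw [← Real.sqrt_sq (abs_nonneg (p a - q a)), sq_abs]
    apply Real.sqrt_le_sqrt
    have := pointwise_pinsker (hp0 a) (hq0 a) (habs a)
    rw [hm, hk]
    calc (p a - q a)^2 ≤ 2 * (p a + 2 * q a) * (p a * Real.log (p a / q a) - p a + q a) / 3 := by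
          linarith
      _ = (2 * p a + 4 * q a) / 3 * (p a * Real.log (p a / q a) - p a + q a) := by ring
  have hsum_m : ∑ a, m a = 2 := by
    rw [hm]
    simp only
    rw [← Finset.sum_div]
    rw [Finset.sum_add_distrib, ← Finset.mul_sum, ← Finset.mul_sum, hp1, hq1]
    norm_num
  have hsum_k : ∑ a, k a = ∑ a, p a * Real.log (p a / q a) := by
    rw [hk]
    simp only
    rw [Finset.sum_add_distrib, Finset.sum_sub_distrib, hp1, hq1]
    ring
  have hcs : (∑ a, Real.sqrt (m a) * Real.sqrt (k a))^2
      ≤ (∑ a, m a) * (∑ a, k a) := by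
    have := Finset.sum_mul_sq_le_sq_mul_sq Finset.univ
      (fun a => Real.sqrt (m a)) (fun a => Real.sqrt (k a))
    simp_rw [Real.sq_sqrt (hmnn _), Real.sq_sqrt (hknn _)] at this
    exact this
  calc ∑ a, |p a - q a| ≤ ∑ a, Real.sqrt (m a) * Real.sqrt (k a) :=
        Finset.sum_le_sum fun a _ => hstep1 a
    _ ≤ Real.sqrt (2 * ∑ a, p a * Real.log (p a / q a)) := by
        rw [← hsum_k, show (2:ℝ) * ∑ a, k a = (∑ a, m a) * ∑ a, k a by rw [hsum_m]]
        exact Real.le_sqrt_of_sq_le hcs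


/-- policy performance bound (Lemma 3.1, lower inequality). -/
theorem performance_lower_bound {S A : Type*} [Fintype S] [DecidableEq S] [Fintype A] [Nonempty S] [Nonempty A]
    (P : S → A → S → ℝ) (hP0 : ∀ s a s', 0 ≤ P s a s') (hP1 : ∀ s a, ∑ s', P s a s' = 1)
    (γ : ℝ) (hγ0 : 0 < γ) (hγ1 : γ < 1)
    (ρ0 : S → ℝ) (hρ0 : ∀ s, 0 ≤ ρ0 s) (hρ1 : ∑ s, ρ0 s = 1)
    (pol : S → A → ℝ) (hpol0 : ∀ s a, 0 ≤ pol s a) (hpol1 : ∀ s, ∑ a, pol s a = 1) (pol' : S → A → ℝ) (hpol'0 : ∀ s a, 0 ≤ pol' s a) (hpol'1 : ∀ s, ∑ a, pol' s a = 1)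
    (habs : ∀ s a, pol s a = 0 → pol' s a = 0) (F : S → A → ℝ) :
    Jret P γ ρ0 F pol' - Jret P γ ρ0 F pol ≥
      (1 / (1 - γ)) * surrAdv P γ ρ0 F pol pol'
        - (Real.sqrt 2 * γ * epsAdv P γ F pol pol' / (1 - γ) ^ 2) *
          Real.sqrt (avgKL P γ ρ0 pol' pol) := by
  classical
  have hγ1' : (0:ℝ) < 1 - γ := by linarith
  have hpdl := pdl P hP0 hP1 γ hγ0 hγ1 ρ0 hρ0 hρ1 pol hpol0 hpol1 pol' hpol'0 hpol'1 F
  set d : S → ℝ := dVisit P γ ρ0 pol with hd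
  set d' : S → ℝ := dVisit P γ ρ0 pol' with hd'
  set g : S → ℝ := fun s => ∑ a, pol' s a * Adv P γ F pol s a with hg
  set kl : S → ℝ := klState pol' pol with hkl
  set ε : ℝ := epsAdv P γ F pol pol' with hεdef
  set K : ℝ := Real.sqrt (avgKL P γ ρ0 pol' pol) with hK
  have hdnn : ∀ s, 0 ≤ d s := fun s =>
    dVisit_nonneg P hP0 hP1 γ hγ0 hγ1 ρ0 hρ0 hρ1 pol hpol0 hpol1 s
  have hdsum : ∑ s, d s = 1 := dVisit_sum_one P hP0 hP1 γ hγ0 hγ1 ρ0 hρ0 hρ1 pol hpol0 hpol1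
  have hJ : Jret P γ ρ0 F pol' - Jret P γ ρ0 F pol = (1/(1-γ)) * ∑ s, d' s * g s := by
    rw [hpdl]
    field_simp
  have hε : ∀ s, |g s| ≤ ε := by
    intro s
    exact Finset.le_sup' (fun s => |∑ a, pol' s a * Adv P γ F pol s a|) (Finset.mem_univ s)
  have hε0 : 0 ≤ ε := le_trans (abs_nonneg _) (hε (Classical.arbitrary S))
  -- kl nonneg
  have hklnn : ∀ s, 0 ≤ kl s := by
    intro s
    have hident : ∑ a, (pol' s a * Real.log (pol' s a / pol s a) - pol' s a + pol s a)
        = kl s := by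
      rw [Finset.sum_add_distrib, Finset.sum_sub_distrib, hpol'1 s, hpol1 s, hkl]
      unfold klState
      ring
    rw [← hident]
    exact Finset.sum_nonneg fun a _ => klterm_nonneg (hpol'0 s a) (hpol0 s a) (habs s a)
  -- pinsker per state
  have hpin : ∀ s, ∑ a, |pol' s a - pol s a| ≤ Real.sqrt (2 * kl s) := by
    intro s
    have := pinsker_fin (pol' s) (pol s) (hpol'0 s) (hpol0 s) (hpol'1 s) (hpol1 s) (habs s)
    exact this
  -- aggregation by Cauchy-Schwarz
  have hagg : ∑ s, d s * Real.sqrt (2 * kl s) ≤ Real.sqrt 2 * K := by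
    have hcs := Finset.sum_sq_le_sum_mul_sum_of_sq_eq_mul Finset.univ
      (r := fun s => d s * Real.sqrt (2 * kl s)) (f := fun s => d s)
      (g := fun s => d s * (2 * kl s))
      (fun s _ => hdnn s)
      (fun s _ => mul_nonneg (hdnn s) (by have := hklnn s; positivity))
      (fun s _ => by
        rw [mul_pow, Real.sq_sqrt (by have := hklnn s; positivity)]
        ring)
    rw [hdsum, one_mul] at hcs
    have h2 : ∑ s, d s * (2 * kl s) = 2 * avgKL P γ ρ0 pol' pol := by
      unfold avgKL
      rw [Finset.mul_sum]
      exact Finset.sum_congr rfl fun s _ => by rw [hkl, hd]; ring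
    rw [h2] at hcs
    have := Real.le_sqrt_of_sq_le hcs
    rwa [Real.sqrt_mul (by norm_num) _, ← hK] at this
  -- l1 bound
  have hN : ∑ s, |d' s - d s| ≤ (γ / (1 - γ)) * (Real.sqrt 2 * K) := by
    refine (dvisit_l1_bound P hP0 hP1 γ hγ0 hγ1 ρ0 hρ0 hρ1 pol hpol0 hpol1
      pol' hpol'0 hpol'1).trans ?_
    apply mul_le_mul_of_nonneg_left _ (by positivity)
    refine le_trans ?_ hagg
    exact Finset.sum_le_sum fun s _ => mul_le_mul_of_nonneg_left (hpin s) (hdnn s)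
  -- error term bound
  have hdiff : |∑ s, d' s * g s - ∑ s, d s * g s| ≤ ε * ∑ s, |d' s - d s| := by
    calc |∑ s, d' s * g s - ∑ s, d s * g s| = |∑ s, (d' s - d s) * g s| := by
          rw [← Finset.sum_sub_distrib]
          congr 1
          exact Finset.sum_congr rfl fun s _ => by ring
      _ ≤ ∑ s, |(d' s - d s) * g s| := Finset.abs_sum_le_sum_abs _ _
      _ ≤ ∑ s, |d' s - d s| * ε := by
          apply Finset.sum_le_sum; intro s _
          rw [abs_mul]
          exact mul_le_mul_of_nonneg_left (hε s) (abs_nonneg _)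
      _ = ε * ∑ s, |d' s - d s| := by rw [← Finset.sum_mul]; ring
  have hεN : ε * ∑ s, |d' s - d s| ≤ ε * ((γ / (1 - γ)) * (Real.sqrt 2 * K)) :=
    mul_le_mul_of_nonneg_left hN hε0
  have hlow : ∑ s, d' s * g s ≥ ∑ s, d s * g s - ε * ((γ / (1 - γ)) * (Real.sqrt 2 * K)) := by
    have := (abs_le.mp hdiff).1
    linarith
  have hsurr : surrAdv P γ ρ0 F pol pol' = ∑ s, d s * g s := rfl
  rw [hJ, hsurr]
  have hmono : (1/(1-γ)) * (∑ s, d s * g s - ε * ((γ / (1 - γ)) * (Real.sqrt 2 * K)))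
      ≤ (1/(1-γ)) * ∑ s, d' s * g s :=
    mul_le_mul_of_nonneg_left hlow (by positivity)
  have halg : (1/(1-γ)) * (∑ s, d s * g s - ε * ((γ / (1 - γ)) * (Real.sqrt 2 * K)))
      = (1/(1-γ)) * ∑ s, d s * g s - (Real.sqrt 2 * γ * ε / (1 - γ)^2) * K := by
    field_simp
  linarith [hmono, halg.symm.le]
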